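/- Let G be a group, λ a nonempty set, h : G → G a group automorphism, φ : λ → λ a bijection, and u : λ → G any map. Then the map σ on the Brandt semigroup B_λ(G) defined by σ(α, g, β) = (φ(α), u(α)·h(g)·(u(β))⁻¹, φ(β)) and σ(0) = 0 is an automorphism of B_λ(G). -/

import Mathlib

/-- The Brandt semigroup `B_Λ(G)` over a group `G`: its underlying set is
`(Λ × G × Λ) ∪ {0}`, where `none` plays the role of the zero `0`. -/
def BrandtG (Λ G : Type*) : Type _ :=
  Option (Λ × G × Λ)

namespace BrandtG

variable {Λ G : Type*}

instance : Zero (BrandtG Λ G) := ⟨none⟩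

open Classical in
/-- `(α, a, β)·(γ, b, δ) = (α, ab, δ)` if `β = γ`, and `0` otherwise;
`0` is a two-sided zero. -/
noncomputable instance [Mul G] : Mul (BrandtG Λ G) :=
  ⟨fun x y =>
    match x, y with
    | some (α, a, β), some (γ, b, δ) =>
        if β = γ then some (α, a * b, δ) else 0
    | _, _ => 0⟩

end BrandtG

/-- An automorphism of a semigroup: a bijective map preserving the multiplication. -/
def IsSemigroupAut {T : Type*} [Mul T] (σ : T → T) : Prop :=
  Function.Bijective σ ∧ ∀ x y : T, σ (x * y) = σ x * σ y

lemma BrandtG.zero_def {Λ G : Type*} : (0 : BrandtG Λ G) = none := rfl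

open Classical in
lemma BrandtG.mul_some {Λ G : Type*} [Mul G] {x y : BrandtG Λ G}
    {α : Λ} {a : G} {β γ : Λ} {b : G} {δ : Λ}
    (hx : x = some (α, a, β)) (hy : y = some (γ, b, δ)) :
    x * y = if β = γ then (some (α, a * b, δ) : BrandtG Λ G) else (none : BrandtG Λ G) := by
  subst hx hy; rfl

lemma BrandtG.none_mul {Λ G : Type*} [Mul G] (y : BrandtG Λ G) :
    (show BrandtG Λ G from none) * y = none := by
  cases y <;> rfl

lemma BrandtG.mul_none {Λ G : Type*} [Mul G] (x : BrandtG Λ G) :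
    x * (show BrandtG Λ G from none) = none := by
  cases x <;> rfl

/-- Let `G` be a group, `Λ` a nonempty set, `h : G → G` a group automorphism,
`φ : Λ → Λ` a bijection, and `u : Λ → G` any map. Then the map `σ` on the Brandt
semigroup `B_Λ(G)` defined by `σ(α, g, β) = (φ(α), u(α)·h(g)·(u(β))⁻¹, φ(β))` and
`σ(0) = 0` is an automorphism of `B_Λ(G)`. -/
theorem stmt_2 {Λ G : Type*} [Nonempty Λ] [Group G]
    (h : G ≃* G) (φ : Λ ≃ Λ) (u : Λ → G)
    (σ : BrandtG Λ G → BrandtG Λ G)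
    (hσ : ∀ (α β : Λ) (g : G),
      σ (some (α, g, β)) = some (φ α, u α * h g * (u β)⁻¹, φ β))
    (hσ0 : σ 0 = 0) :
    IsSemigroupAut σ := by
  have hnone : σ none = none := hσ0
  constructor
  · constructor
    · rintro (_ | ⟨α, a, β⟩) (_ | ⟨γ, b, δ⟩) hxy
      · rfl
      · rw [hnone, hσ γ δ b] at hxy; exact absurd hxy (by simp)
      · rw [hnone, hσ α β a] at hxy; exact absurd hxy (by simp)
      · rw [hσ α β a, hσ γ δ b] at hxy
        replace hxy := Option.some.inj hxy
        rw [Prod.mk.injEq, Prod.mk.injEq] at hxy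
        obtain ⟨h1, h2, h3⟩ := hxy
        obtain rfl : α = γ := φ.injective h1
        obtain rfl : β = δ := φ.injective h3
        have : h a = h b := by
          exact mul_left_cancel (mul_right_cancel h2)
        obtain rfl : a = b := h.injective this
        rfl
    · rintro (_ | ⟨α, a, β⟩)
      · exact ⟨none, hnone⟩
      · refine ⟨some (φ.symm α, h.symm ((u (φ.symm α))⁻¹ * a * u (φ.symm β)), φ.symm β), ?_⟩
        rw [hσ]
        simp [mul_assoc]
        rfl
  · rintro (_ | ⟨α, a, β⟩) (_ | ⟨γ, b, δ⟩)
    · show σ 0 = σ 0 * σ 0; rw [hσ0]; rfl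
    · show σ 0 = σ 0 * σ (some (γ, b, δ)); rw [hσ0, hσ]; rfl
    · show σ 0 = σ (some (α, a, β)) * σ 0; rw [hσ0, hσ]; rfl
    · rw [BrandtG.mul_some rfl rfl, BrandtG.mul_some (hσ α β a) (hσ γ δ b)]
      by_cases hβγ : β = γ
      · subst hβγ
        rw [if_pos rfl, if_pos rfl, hσ]
        congr 2
        simp [map_mul, mul_assoc]
      · rw [if_neg hβγ, if_neg (fun e => hβγ (φ.injective e)), hnone]
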